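/- For every w with 0 < w < v there exists a constant C_w > 0 such that for all integers κ ≥ 0, r ≥ 1, K ≥ 1, k ≥ 1 and s with s ≥ κ + r, writing S := Σ_{i=s}^{s+K−1} (U_{i+k} − U_i), one has E[ |E[S² | 𝓕_κ] − E[S²]| ] ≤ C_w K² r^{−w}. -/

import Mathlib

open MeasureTheory ProbabilityTheory Filter Finset
open scoped ProbabilityTheory ENNReal NNReal BigOperators

namespace DepNoise

variable {Ω : Type*} [MeasureSpace Ω]

/-- Variance of `U 0`. -/
noncomputable def varU (U : ℕ → Ω → ℝ) : ℝ :=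
  (∫ ω, (U 0 ω) ^ 2) - (∫ ω, U 0 ω) ^ 2

/-- Autocovariance `γ(h) = Cov(U 0, U h)`. -/
noncomputable def gammaCov (U : ℕ → Ω → ℝ) (h : ℕ) : ℝ :=
  (∫ ω, U 0 ω * U h ω) - (∫ ω, U 0 ω) * (∫ ω, U h ω)

/-- The σ-algebra `σ(U 0, …, U k)`. -/
def pastSigma (U : ℕ → Ω → ℝ) (k : ℕ) : MeasurableSpace Ω :=
  ⨆ i : Fin (k + 1), MeasurableSpace.comap (U i) inferInstance

/-- The σ-algebra `σ(U m, U (m+1), …)`. -/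
def futureSigma (U : ℕ → Ω → ℝ) (m : ℕ) : MeasurableSpace Ω :=
  ⨆ i : ℕ, MeasurableSpace.comap (U (m + i)) inferInstance


/-! ### Auxiliary lemmas -/

/-- `±1`-valued function attached to a set. -/
noncomputable def sg {α : Type*} (A : Set α) (x : α) : ℝ :=
  2 * A.indicator (fun _ => (1:ℝ)) x - 1

lemma sg_mem {α : Type*} {A : Set α} {x : α} (h : x ∈ A) : sg A x = 1 := by
  simp [sg, h]; norm_num

lemma sg_not_mem {α : Type*} {A : Set α} {x : α} (h : x ∉ A) : sg A x = -1 := by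
  simp [sg, h]

lemma sg_abs {α : Type*} (A : Set α) (x : α) : |sg A x| ≤ 1 := by
  by_cases h : x ∈ A
  · simp [sg_mem h]
  · simp [sg_not_mem h]

lemma sg_mul_self {α : Type*} {A : Set α} {x : α} {D : ℝ} (h : 0 ≤ D ↔ x ∈ A) :
    sg A x * D = |D| := by
  by_cases hx : x ∈ A
  · rw [sg_mem hx, one_mul, abs_of_nonneg (h.mpr hx)]
  · have hD : D < 0 := by
      by_contra hD
      push_neg at hD
      exact hx (h.mp hD)
    rw [sg_not_mem hx, abs_of_neg hD]; ring

lemma sg_sm {α : Type*} {m : MeasurableSpace α} {A : Set α} (hA : MeasurableSet[m] A) :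
    StronglyMeasurable[m] (sg A) := by
  apply StronglyMeasurable.sub _ stronglyMeasurable_const
  exact (stronglyMeasurable_const.indicator hA).const_mul 2

lemma sg_integrable {α : Type*} {m0 : MeasurableSpace α} {μ : Measure α}
    [IsProbabilityMeasure μ] {A : Set α} (hA : MeasurableSet A) :
    Integrable (sg A) μ := by
  refine Integrable.mono' (integrable_const 1) ((sg_sm hA).aestronglyMeasurable) ?_
  exact Filter.Eventually.of_forall fun x => by simpa using sg_abs A x

lemma sg_integral {α : Type*} {m0 : MeasurableSpace α} {μ : Measure α}
    [IsProbabilityMeasure μ] {A : Set α} (hA : MeasurableSet A) :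
    ∫ x, sg A x ∂μ = 2 * (μ A).toReal - 1 := by
  unfold sg
  rw [integral_sub (((integrable_const (1:ℝ)).indicator hA).const_mul 2) (integrable_const 1),
    integral_const_mul, integral_indicator_const _ hA]
  simp [measureReal_def]

lemma cov_pm {α : Type*} {m n : MeasurableSpace α} {m0 : MeasurableSpace α} {μ : Measure α}
    [IsProbabilityMeasure μ] (hm : m ≤ m0) (hn : n ≤ m0)
    {A B : Set α} (hA : MeasurableSet[m] A) (hB : MeasurableSet[n] B) :
    (∫ x, sg A x * sg B x ∂μ) - (∫ x, sg A x ∂μ) * (∫ x, sg B x ∂μ)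
    = 4 * ((μ (A ∩ B)).toReal - (μ A).toReal * (μ B).toReal) := by
  have hA0 : MeasurableSet[m0] A := hm _ hA
  have hB0 : MeasurableSet[m0] B := hn _ hB
  have hAB0 : MeasurableSet[m0] (A ∩ B) := hA0.inter hB0
  have e2 : (fun x => sg A x * sg B x)
      = fun x => (A ∩ B).indicator (fun _ => (4:ℝ)) x - A.indicator (fun _ => (2:ℝ)) x
          - B.indicator (fun _ => (2:ℝ)) x + 1 := by
    funext x; by_cases h1 : x ∈ A <;> by_cases h2 : x ∈ B <;>
      simp [sg_mem, sg_not_mem, h1, h2, Set.indicator, Set.mem_inter_iff] <;> ring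
  have iAB : Integrable (fun x => (A ∩ B).indicator (fun _ => (4:ℝ)) x) μ :=
    (integrable_const (4:ℝ)).indicator hAB0
  have iA : Integrable (fun x => A.indicator (fun _ => (2:ℝ)) x) μ :=
    (integrable_const (2:ℝ)).indicator hA0
  have iB : Integrable (fun x => B.indicator (fun _ => (2:ℝ)) x) μ :=
    (integrable_const (2:ℝ)).indicator hB0
  have iF2 : Integrable (fun x => (A ∩ B).indicator (fun _ => (4:ℝ)) x
      - A.indicator (fun _ => (2:ℝ)) x) μ := iAB.sub iA
  have iF : Integrable (fun x => (A ∩ B).indicator (fun _ => (4:ℝ)) x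
      - A.indicator (fun _ => (2:ℝ)) x - B.indicator (fun _ => (2:ℝ)) x) μ := iF2.sub iB
  rw [e2, sg_integral hA0, sg_integral hB0,
    integral_add iF (integrable_const 1), integral_sub iF2 iB, integral_sub iAB iA,
    integral_indicator_const _ hAB0, integral_indicator_const _ hA0,
    integral_indicator_const _ hB0]
  simp only [smul_eq_mul, integral_const, measureReal_def, measure_univ, ENNReal.toReal_one, one_smul]
  ring

lemma exists_sign {α : Type*} {m : MeasurableSpace α} {m0 : MeasurableSpace α} {μ : Measure α}
    [IsProbabilityMeasure μ] (hm : m ≤ m0) {g : α → ℝ} (hgi : Integrable g μ) :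
    ∃ A : Set α, MeasurableSet[m] A ∧
      ∫ x, |(μ[g|m]) x - ∫ y, g y ∂μ| ∂μ
        = (∫ x, sg A x * g x ∂μ) - (∫ x, sg A x ∂μ) * ∫ y, g y ∂μ := by
  set c := ∫ y, g y ∂μ with hc
  set D : α → ℝ := fun x => (μ[g|m]) x - c with hD
  have hDsm : StronglyMeasurable[m] D :=
    stronglyMeasurable_condExp.sub stronglyMeasurable_const
  have hDi : Integrable D μ := integrable_condExp.sub (integrable_const c)
  set A : Set α := {x | 0 ≤ D x} with hA'
  have hA : MeasurableSet[m] A := by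
    have : Measurable[m] D := hDsm.measurable
    exact measurableSet_le measurable_const this
  refine ⟨A, hA, ?_⟩
  have habs : ∀ x, |D x| = sg A x * D x := by
    intro x
    exact (sg_mul_self (by simp [hA', Set.mem_setOf_eq])).symm
  have hξi : Integrable (sg A) μ := sg_integrable (hm _ hA)
  have hmulce : Integrable (fun x => sg A x * (μ[g|m]) x) μ :=
    integrable_condExp.bdd_mul ((sg_sm hA).mono hm).aestronglyMeasurable
      (Filter.Eventually.of_forall fun x => by simpa using sg_abs A x)
  have hmulg : Integrable (fun x => sg A x * g x) μ :=
    hgi.bdd_mul ((sg_sm hA).mono hm).aestronglyMeasurable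
      (Filter.Eventually.of_forall fun x => by simpa using sg_abs A x)
  have hpull : μ[(fun x => sg A x * g x)|m] =ᵐ[μ] fun x => sg A x * (μ[g|m]) x := by
    have := condExp_mul_of_stronglyMeasurable_left (μ := μ) (sg_sm hA) hmulg hgi
    exact this
  calc ∫ x, |D x| ∂μ = ∫ x, sg A x * D x ∂μ := by
        exact integral_congr_ae (Filter.Eventually.of_forall habs)
    _ = ∫ x, sg A x * (μ[g|m]) x ∂μ - ∫ x, sg A x * c ∂μ := by
        rw [← integral_sub hmulce]
        · congr 1; funext x; simp [hD]; ring
        · exact hξi.mul_const c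
    _ = (∫ x, sg A x * g x ∂μ) - (∫ x, sg A x ∂μ) * c := by
        congr 1
        · rw [integral_congr_ae hpull.symm, integral_condExp hm]
        · exact integral_mul_const c _

lemma cov_le {α : Type*} {n : MeasurableSpace α} {m0 : MeasurableSpace α} {μ : Measure α}
    [IsProbabilityMeasure μ] (hn : n ≤ m0) {ξ g : α → ℝ}
    (hξi : Integrable ξ μ)
    (hg : StronglyMeasurable[n] g) {Bb : ℝ} (hBb : 0 ≤ Bb) (hgB : ∀ x, |g x| ≤ Bb) :
    (∫ x, ξ x * g x ∂μ) - (∫ x, ξ x ∂μ) * ∫ x, g x ∂μ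
      ≤ Bb * ∫ x, |(μ[ξ|n]) x - ∫ y, ξ y ∂μ| ∂μ := by
  set c := ∫ y, ξ y ∂μ with hc
  have hWi : Integrable (fun x => (μ[ξ|n]) x - c) μ := integrable_condExp.sub (integrable_const c)
  have hgaesm : AEStronglyMeasurable g μ := (hg.mono hn).aestronglyMeasurable
  have hgi : Integrable g μ :=
    Integrable.mono' (integrable_const Bb) hgaesm
      (Filter.Eventually.of_forall fun x => by simpa using hgB x)
  have hmulg : Integrable (fun x => g x * ξ x) μ :=
    hξi.bdd_mul hgaesm (Filter.Eventually.of_forall fun x => by simpa using hgB x)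
  have hpull : μ[(fun x => g x * ξ x)|n] =ᵐ[μ] fun x => g x * (μ[ξ|n]) x :=
    condExp_mul_of_stronglyMeasurable_left (μ := μ) hg hmulg hξi
  have hmulce : Integrable (fun x => g x * (μ[ξ|n]) x) μ :=
    integrable_condExp.bdd_mul hgaesm (Filter.Eventually.of_forall fun x => by simpa using hgB x)
  have hmulW : Integrable (fun x => g x * ((μ[ξ|n]) x - c)) μ :=
    hWi.bdd_mul hgaesm (Filter.Eventually.of_forall fun x => by simpa using hgB x)
  have e0 : ∫ x, ξ x * g x ∂μ = ∫ x, g x * (μ[ξ|n]) x ∂μ := by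
    rw [show (fun x => ξ x * g x) = fun x => g x * ξ x from funext fun x => mul_comm _ _,
      ← integral_condExp hn (f := fun x => g x * ξ x), integral_congr_ae hpull]
  have e1 : (∫ x, ξ x * g x ∂μ) - (∫ x, ξ x ∂μ) * ∫ x, g x ∂μ
      = ∫ x, g x * ((μ[ξ|n]) x - c) ∂μ := by
    have hsplit : (fun x => g x * ((μ[ξ|n]) x - c)) = fun x => g x * (μ[ξ|n]) x - g x * c :=
      funext fun x => by ring
    rw [e0, hsplit, integral_sub hmulce (hgi.mul_const c), integral_mul_const]
    rw [← hc]; ring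
  rw [e1]
  calc ∫ x, g x * ((μ[ξ|n]) x - c) ∂μ
      ≤ ∫ x, Bb * |(μ[ξ|n]) x - c| ∂μ := by
        refine integral_mono hmulW (hWi.abs.const_mul Bb) fun x => ?_
        calc g x * ((μ[ξ|n]) x - c) ≤ |g x * ((μ[ξ|n]) x - c)| := le_abs_self _
          _ = |g x| * |(μ[ξ|n]) x - c| := abs_mul _ _
          _ ≤ Bb * |(μ[ξ|n]) x - c| :=
              mul_le_mul_of_nonneg_right (hgB x) (abs_nonneg _)
    _ = Bb * ∫ x, |(μ[ξ|n]) x - c| ∂μ := integral_const_mul Bb _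

/-- Core mixing estimate: for `g` bounded by `Bb` and `n`-measurable,
`E|E[g|m] − E g| ≤ 4 Bb α`. -/
lemma condexp_dist_le {α : Type*} {m n : MeasurableSpace α} {m0 : MeasurableSpace α}
    {μ : Measure α} [IsProbabilityMeasure μ] (hm : m ≤ m0) (hn : n ≤ m0) {al : ℝ}
    (hmix : ∀ A B : Set α, MeasurableSet[m] A → MeasurableSet[n] B →
      |(μ (A ∩ B)).toReal - (μ A).toReal * (μ B).toReal| ≤ al)
    {g : α → ℝ} (hg : StronglyMeasurable[n] g) {Bb : ℝ} (hBb : 0 ≤ Bb)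
    (hgB : ∀ x, |g x| ≤ Bb) :
    ∫ x, |(μ[g|m]) x - ∫ y, g y ∂μ| ∂μ ≤ 4 * Bb * al := by
  have hgi : Integrable g μ :=
    Integrable.mono' (integrable_const Bb) ((hg.mono hn).aestronglyMeasurable)
      (Filter.Eventually.of_forall fun x => by simpa using hgB x)
  obtain ⟨A, hA, hEq⟩ := exists_sign hm hgi
  have hξi : Integrable (sg A) μ := sg_integrable (hm _ hA)
  have h1 := cov_le hn hξi hg hBb hgB
  obtain ⟨B, hB, hEq2⟩ := exists_sign hn hξi
  have hpm : (∫ x, sg B x * sg A x ∂μ) - (∫ x, sg B x ∂μ) * (∫ x, sg A x ∂μ)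
      = 4 * ((μ (B ∩ A)).toReal - (μ B).toReal * (μ A).toReal) := cov_pm hn hm hB hA
  have h2 : ∫ x, |(μ[sg A|n]) x - ∫ y, sg A y ∂μ| ∂μ ≤ 4 * al := by
    rw [hEq2, hpm]
    have hcomm : (μ (B ∩ A)).toReal - (μ B).toReal * (μ A).toReal
        = (μ (A ∩ B)).toReal - (μ A).toReal * (μ B).toReal := by
      rw [Set.inter_comm]; ring
    rw [hcomm]
    calc 4 * ((μ (A ∩ B)).toReal - (μ A).toReal * (μ B).toReal)
        ≤ 4 * |(μ (A ∩ B)).toReal - (μ A).toReal * (μ B).toReal| := by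
          have := le_abs_self ((μ (A ∩ B)).toReal - (μ A).toReal * (μ B).toReal)
          linarith
      _ ≤ 4 * al := by linarith [hmix A B hA hB]
  calc ∫ x, |(μ[g|m]) x - ∫ y, g y ∂μ| ∂μ
      = (∫ x, sg A x * g x ∂μ) - (∫ x, sg A x ∂μ) * ∫ y, g y ∂μ := hEq
    _ ≤ Bb * ∫ x, |(μ[sg A|n]) x - ∫ y, sg A y ∂μ| ∂μ := h1
    _ ≤ Bb * (4 * al) := mul_le_mul_of_nonneg_left h2 hBb
    _ = 4 * Bb * al := by ring

lemma abs_condexp_ae {α : Type*} {m : MeasurableSpace α} {m0 : MeasurableSpace α}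
    {μ : Measure α} {f : α → ℝ} (hf : Integrable f μ) :
    ∀ᵐ x ∂μ, |(μ[f|m]) x| ≤ (μ[(fun y => |f y|)|m]) x := by
  filter_upwards [condExp_mono hf hf.abs
      (Filter.Eventually.of_forall fun x => le_abs_self (f x)),
    Filter.EventuallyLE.trans (condExp_neg f m).symm.le
      (condExp_mono hf.neg hf.abs
        (Filter.Eventually.of_forall fun x => neg_le_abs (f x)))] with x hx1 hx2
  have hx2' : -(μ[f|m]) x ≤ (μ[(fun y => |f y|)|m]) x := by simpa using hx2
  exact abs_le.mpr ⟨by linarith, hx1⟩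

lemma dist_decomp {α : Type*} {m : MeasurableSpace α} {m0 : MeasurableSpace α}
    {μ : Measure α} [IsProbabilityMeasure μ] (hm : m ≤ m0) {f g : α → ℝ}
    (hfi : Integrable f μ) (hgi : Integrable g μ) :
    ∫ x, |(μ[f|m]) x - ∫ y, f y ∂μ| ∂μ
      ≤ (∫ x, |(μ[g|m]) x - ∫ y, g y ∂μ| ∂μ) + 2 * ∫ x, |f x - g x| ∂μ := by
  have hfg : Integrable (fun x => f x - g x) μ := hfi.sub hgi
  have e : f = (fun x => f x - g x) + g := funext fun x => by
    simp only [Pi.add_apply]; ring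
  have decomp : μ[f|m] =ᵐ[μ] μ[fun x => f x - g x|m] + μ[g|m] := by
    nth_rewrite 1 [e]
    exact condExp_add hfg hgi m
  have key : ∀ᵐ x ∂μ, |(μ[f|m]) x - ∫ y, f y ∂μ|
      ≤ (μ[(fun y => |f y - g y|)|m]) x + |(μ[g|m]) x - ∫ y, g y ∂μ|
        + |(∫ y, g y ∂μ) - ∫ y, f y ∂μ| := by
    filter_upwards [decomp, abs_condexp_ae (m := m) hfg] with x h1 h2
    have : (μ[f|m]) x - ∫ y, f y ∂μ
        = (μ[fun y => f y - g y|m]) x + ((μ[g|m]) x - ∫ y, g y ∂μ)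
          + ((∫ y, g y ∂μ) - ∫ y, f y ∂μ) := by
      rw [h1]; simp only [Pi.add_apply]; ring
    rw [this]
    calc |(μ[fun y => f y - g y|m]) x + ((μ[g|m]) x - ∫ y, g y ∂μ)
          + ((∫ y, g y ∂μ) - ∫ y, f y ∂μ)|
        ≤ |(μ[fun y => f y - g y|m]) x| + |(μ[g|m]) x - ∫ y, g y ∂μ|
          + |(∫ y, g y ∂μ) - ∫ y, f y ∂μ| := by
          exact (abs_add_le _ _).trans (add_le_add_left (abs_add_le _ _) _)
      _ ≤ (μ[(fun y => |f y - g y|)|m]) x + |(μ[g|m]) x - ∫ y, g y ∂μ|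
          + |(∫ y, g y ∂μ) - ∫ y, f y ∂μ| := by
          exact add_le_add_left (add_le_add_left h2 _) _
  have hint1 : Integrable (fun x => |(μ[f|m]) x - ∫ y, f y ∂μ|) μ :=
    (integrable_condExp.sub (integrable_const _)).abs
  have i1 : Integrable (fun x => (μ[(fun y => |f y - g y|)|m]) x) μ := integrable_condExp
  have i2 : Integrable (fun x => |(μ[g|m]) x - ∫ y, g y ∂μ|) μ :=
    (integrable_condExp.sub (integrable_const _)).abs
  have i12 : Integrable (fun x => (μ[(fun y => |f y - g y|)|m]) x
      + |(μ[g|m]) x - ∫ y, g y ∂μ|) μ := i1.add i2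
  have hint2 : Integrable (fun x => (μ[(fun y => |f y - g y|)|m]) x
      + |(μ[g|m]) x - ∫ y, g y ∂μ| + |(∫ y, g y ∂μ) - ∫ y, f y ∂μ|) μ :=
    i12.add (integrable_const _)
  have h3 := integral_mono_ae hint1 hint2 key
  have e2 : ∫ x, ((μ[(fun y => |f y - g y|)|m]) x + |(μ[g|m]) x - ∫ y, g y ∂μ|
      + |(∫ y, g y ∂μ) - ∫ y, f y ∂μ|) ∂μ
      = (∫ x, |f x - g x| ∂μ) + (∫ x, |(μ[g|m]) x - ∫ y, g y ∂μ| ∂μ)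
        + |(∫ y, g y ∂μ) - ∫ y, f y ∂μ| := by
    rw [integral_add i12 (integrable_const _), integral_add i1 i2,
      integral_condExp hm, integral_const]
    simp [measure_univ]
  rw [e2] at h3
  have h4 : |(∫ y, g y ∂μ) - ∫ y, f y ∂μ| ≤ ∫ x, |f x - g x| ∂μ := by
    have hh : |∫ x, (f x - g x) ∂μ| ≤ ∫ x, |f x - g x| ∂μ := by
      simpa using norm_integral_le_integral_norm (fun x => f x - g x)
    rw [integral_sub hfi hgi] at hh
    rw [abs_sub_comm]
    exact hh
  linarith

/-! ### Truncation -/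

noncomputable def clmp (M x : ℝ) : ℝ := max (-M) (min M x)

lemma clmp_abs_le {M : ℝ} (hM : 0 ≤ M) (x : ℝ) : |clmp M x| ≤ M := by
  rw [abs_le]; unfold clmp
  constructor
  · exact le_max_left _ _
  · exact max_le (by linarith) (min_le_left _ _)

lemma clmp_abs_le_abs {M : ℝ} (hM : 0 ≤ M) (x : ℝ) : |clmp M x| ≤ |x| := by
  unfold clmp
  rcases le_total x 0 with hx | hx
  · rcases le_total x (-M) with h | h
    · rw [show min M x = x from min_eq_right (by linarith), show max (-M) x = -M from
        max_eq_left h]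
      rw [abs_of_nonpos (by linarith), abs_of_nonpos hx]; linarith
    · rw [show min M x = x from min_eq_right (by linarith), max_eq_right h]
  · rcases le_total M x with h | h
    · rw [min_eq_left h, show max (-M) M = M from max_eq_right (by linarith)]
      rw [abs_of_nonneg hM, abs_of_nonneg hx]; linarith
    · rw [min_eq_right h, max_eq_right (by linarith)]

lemma clmp_sq_diff_le {M : ℝ} (hM : 0 < M) (q : ℕ) (x : ℝ) :
    (x - clmp M x) ^ 2 ≤ |x| ^ (2 * q + 2) / M ^ (2 * q) := by
  have hMq : (0:ℝ) < M ^ (2 * q) := pow_pos hM _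
  by_cases h : |x| ≤ M
  · have : clmp M x = x := by
      unfold clmp
      rw [min_eq_right (abs_le.mp h).2, max_eq_right (abs_le.mp h).1]
    rw [this, sub_self, zero_pow (by norm_num)]
    positivity
  · push_neg at h
    have h1 : (x - clmp M x) ^ 2 ≤ x ^ 2 := by
      unfold clmp
      rcases le_total x 0 with hx | hx
      · have hxM : x < -M := by
          rw [abs_of_nonpos hx] at h; linarith
        rw [min_eq_right (by linarith), max_eq_left (by linarith)]
        nlinarith
      · have hxM : M < x := by rw [abs_of_nonneg hx] at h; linarith
        rw [min_eq_left (by linarith), max_eq_right (by linarith)]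
        nlinarith
    refine h1.trans ?_
    rw [le_div_iff₀ hMq]
    have e : |x| ^ (2 * q + 2) = x ^ 2 * |x| ^ (2 * q) := by
      rw [pow_add, sq_abs]; ring
    rw [e]
    refine mul_le_mul_of_nonneg_left ?_ (sq_nonneg x)
    exact pow_le_pow_left₀ hM.le h.le _

lemma abs_mul_le_lam {L a b : ℝ} (hL : 0 < L) :
    |a * b| ≤ (L * a ^ 2 + b ^ 2 / L) / 2 := by
  have h2L : 2 * L * |a * b| ≤ L ^ 2 * a ^ 2 + b ^ 2 := by
    rcases abs_cases (a * b) with ⟨h, _⟩ | ⟨h, _⟩ <;>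
      nlinarith [sq_nonneg (L * a - b), sq_nonneg (L * a + b)]
  have hX : (L * a ^ 2 + b ^ 2 / L) / 2 = (L ^ 2 * a ^ 2 + b ^ 2) / (2 * L) := by
    field_simp
  rw [hX, le_div_iff₀ (by positivity)]
  linarith

lemma sq_sum_le {ι : Type*} (s : Finset ι) (a b : ι → ℝ) (h : ∀ i ∈ s, (a i) ^ 2 ≤ b i) :
    (∑ i ∈ s, a i) ^ 2 ≤ (s.card : ℝ) * ∑ i ∈ s, b i := by
  calc (∑ i ∈ s, a i) ^ 2 ≤ (s.card : ℝ) * ∑ i ∈ s, (a i) ^ 2 :=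
        sq_sum_le_card_mul_sum_sq
    _ ≤ (s.card : ℝ) * ∑ i ∈ s, b i := by
        refine mul_le_mul_of_nonneg_left (Finset.sum_le_sum h) (by positivity)


lemma clmp_meas (M : ℝ) : Measurable (clmp M) := by
  show Measurable fun x => max (-M) (min M x)
  exact measurable_const.max (measurable_const.min measurable_id)

lemma law_eq' [IsProbabilityMeasure (ℙ : Measure Ω)] (U : ℕ → Ω → ℝ)
    (hMeas : ∀ i, Measurable (U i))
    (hStat : ∀ k n : ℕ,
      Measure.map (fun ω => fun i : Fin (n + 1) => U (k + i) ω) ℙ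
        = Measure.map (fun ω => fun i : Fin (n + 1) => U i ω) ℙ) (j : ℕ) :
    Measure.map (U j) (ℙ : Measure Ω) = Measure.map (U 0) ℙ := by
  have h := hStat j 0
  have hev : Measurable (fun v : Fin 1 → ℝ => v 0) := measurable_pi_apply 0
  have hL : Measurable (fun ω => fun i : Fin 1 => U (j + i) ω) :=
    measurable_pi_lambda _ fun i => hMeas _
  have hR : Measurable (fun ω => fun i : Fin 1 => U i ω) :=
    measurable_pi_lambda _ fun i => hMeas _
  have := congrArg (Measure.map (fun v : Fin 1 → ℝ => v 0)) h
  rwa [Measure.map_map hev hL, Measure.map_map hev hR] at this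

lemma mom_int (U : ℕ → Ω → ℝ) [IsProbabilityMeasure (ℙ : Measure Ω)]
    (hMeas : ∀ i, Measurable (U i))
    (hlaw : ∀ j, Measure.map (U j) (ℙ : Measure Ω) = Measure.map (U 0) ℙ)
    (hMom : ∀ p : ℕ, 1 ≤ p → Integrable (fun ω => |U 0 ω| ^ p) ℙ)
    (j p : ℕ) (hp : 1 ≤ p) :
    Integrable (fun ω => |U j ω| ^ p) (ℙ : Measure Ω) ∧
      ∫ ω, |U j ω| ^ p ∂(ℙ : Measure Ω) = ∫ ω, |U 0 ω| ^ p ∂(ℙ : Measure Ω) := by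
  have hg : Measurable (fun x : ℝ => |x| ^ p) := (measurable_id.abs).pow_const p
  have h0 : Integrable (fun x : ℝ => |x| ^ p) (Measure.map (U 0) ℙ) := by
    rw [integrable_map_measure hg.aestronglyMeasurable (hMeas 0).aemeasurable]
    exact hMom p hp
  have hj : Integrable (fun x : ℝ => |x| ^ p) (Measure.map (U j) ℙ) := by rw [hlaw j]; exact h0
  constructor
  · have := (integrable_map_measure hg.aestronglyMeasurable (hMeas j).aemeasurable).mp hj
    exact this
  · rw [← integral_map (hMeas j).aemeasurable hg.aestronglyMeasurable,
      ← integral_map (hMeas 0).aemeasurable hg.aestronglyMeasurable, hlaw j]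

set_option maxHeartbeats 2000000 in
/-- for `0 < w < v` there is `C_w > 0` so that for all
`κ ≥ 0`, `r, K, k ≥ 1` and `s ≥ κ + r`, writing `S := Σ_{i=s}^{s+K−1} (U_{i+k} − U_i)`,
`E[|E[S²|𝓕_κ] − E[S²]|] ≤ C_w K² r^{−w}`. -/
theorem condexp_square_sum_decay
    {Ω : Type*} [MeasureSpace Ω] [IsProbabilityMeasure (ℙ : Measure Ω)]
    (U : ℕ → Ω → ℝ)
    (hMeas : ∀ i, Measurable (U i))
    (hStat : ∀ k n : ℕ,
      Measure.map (fun ω => fun i : Fin (n + 1) => U (k + i) ω) ℙ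
        = Measure.map (fun ω => fun i : Fin (n + 1) => U i ω) ℙ)
    (hSymm : Measure.map (U 0) ℙ = Measure.map (fun ω => -U 0 ω) ℙ)
    (hMom : ∀ p : ℕ, 1 ≤ p → Integrable (fun ω => |U 0 ω| ^ p) ℙ)
    (C v : ℝ) (hC : 0 < C)
    (hMix : ∀ k h : ℕ, 1 ≤ h → ∀ A B : Set Ω,
      MeasurableSet[pastSigma U k] A → MeasurableSet[futureSigma U (k + h)] B →
      |(ℙ (A ∩ B)).toReal - (ℙ A).toReal * (ℙ B).toReal| ≤ C * (h : ℝ) ^ (-v))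
    (hv : 0 < v) :
    ∀ w : ℝ, 0 < w → w < v → ∃ Cw > (0 : ℝ),
      ∀ κ r K k s : ℕ, 1 ≤ r → 1 ≤ K → 1 ≤ k → κ + r ≤ s →
      ∫ ω, |(ℙ[fun ω' => (∑ i ∈ Finset.Ico s (s + K), (U (i + k) ω' - U i ω')) ^ 2
              | pastSigma U κ]) ω
          - ∫ ω', (∑ i ∈ Finset.Ico s (s + K), (U (i + k) ω' - U i ω')) ^ 2 ∂ℙ| ∂ℙ
        ≤ Cw * (K : ℝ) ^ 2 * (r : ℝ) ^ (-w) := by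
  intro w hw0 hwv
  have hlaw : ∀ j, Measure.map (U j) (ℙ : Measure Ω) = Measure.map (U 0) ℙ :=
    law_eq' U hMeas hStat
  set t : ℝ := (v - w) / 2 with ht'
  have ht : 0 < t := by rw [ht']; linarith
  set q : ℕ := max 1 (Nat.ceil (w / t)) with hq'
  have hqt : w ≤ (q : ℝ) * t := by
    have h1 : w / t ≤ (Nat.ceil (w / t) : ℝ) := Nat.le_ceil _
    have h2 : ((Nat.ceil (w / t) : ℕ) : ℝ) ≤ (q : ℝ) := by
      exact_mod_cast Nat.le_max_right 1 _
    calc w = (w / t) * t := by field_simp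
      _ ≤ (q : ℝ) * t := mul_le_mul_of_nonneg_right (h1.trans h2) ht.le
  set E2 : ℝ := ∫ ω, |U 0 ω| ^ 2 ∂ℙ with hE2'
  set Cq : ℝ := ∫ ω, |U 0 ω| ^ (2 * q + 2) ∂ℙ with hCq'
  have hE2 : 0 ≤ E2 := integral_nonneg fun ω => by positivity
  have hCq : 0 ≤ Cq := integral_nonneg fun ω => by positivity
  refine ⟨16 * C + 4 * Cq + 16 * E2, by linarith, ?_⟩
  intro κ r K k s hr hK hk hs
  -- measurable space facts
  have hm : pastSigma U κ ≤ (inferInstance : MeasurableSpace Ω) :=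
    iSup_le fun i => (hMeas _).comap_le
  have hn : futureSigma U (κ + r) ≤ (inferInstance : MeasurableSpace Ω) :=
    iSup_le fun i => (hMeas _).comap_le
  have hUn : ∀ j, κ + r ≤ j → Measurable[futureSigma U (κ + r)] (U j) := by
    intro j hj
    obtain ⟨i, rfl⟩ := Nat.exists_eq_add_of_le hj
    exact measurable_iff_comap_le.mpr
      (le_iSup (fun i : ℕ => MeasurableSpace.comap (U (κ + r + i)) inferInstance) i)
  -- numeric facts
  have hr1 : (1 : ℝ) ≤ (r : ℝ) := by exact_mod_cast hr
  have hrpos : (0 : ℝ) < (r : ℝ) := by linarith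
  set M : ℝ := (r : ℝ) ^ t with hM'
  have hM1 : 1 ≤ M := Real.one_le_rpow hr1 ht.le
  have hM0 : 0 < M := by linarith
  have hMq : (0 : ℝ) < M ^ q := pow_pos hM0 _
  -- moment facts
  have hU2 := fun j => mom_int U hMeas hlaw hMom j 2 (by norm_num)
  have hUq := fun j => mom_int U hMeas hlaw hMom j (2 * q + 2) (by omega)
  have hcard : (Finset.Ico s (s + K)).card = K := by rw [Nat.card_Ico]; omega
  -- the two functions
  set f : Ω → ℝ := fun ω' => (∑ i ∈ Finset.Ico s (s + K), (U (i + k) ω' - U i ω')) ^ 2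
    with hfdef
  set g : Ω → ℝ :=
    fun ω => (∑ i ∈ Finset.Ico s (s + K), (clmp M (U (i + k) ω) - clmp M (U i ω))) ^ 2
    with hgdef
  -- integrability of f
  have hfmeas : Measurable f :=
    (Finset.measurable_sum _ fun i _ => (hMeas _).sub (hMeas _)).pow_const 2
  have hfb : ∀ ω, f ω ≤ (K : ℝ) * ∑ i ∈ Finset.Ico s (s + K),
      (2 * |U (i + k) ω| ^ 2 + 2 * |U i ω| ^ 2) := by
    intro ω
    rw [hfdef]
    have := sq_sum_le (Finset.Ico s (s + K)) (fun i => U (i + k) ω - U i ω)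
      (fun i => 2 * |U (i + k) ω| ^ 2 + 2 * |U i ω| ^ 2) ?_
    · rwa [hcard] at this
    · intro i _
      show (U (i + k) ω - U i ω) ^ 2 ≤ 2 * |U (i + k) ω| ^ 2 + 2 * |U i ω| ^ 2
      nlinarith [sq_abs (U (i + k) ω), sq_abs (U i ω), sq_nonneg (U (i + k) ω + U i ω)]
  have hbint : Integrable (fun ω => (K : ℝ) * ∑ i ∈ Finset.Ico s (s + K),
      (2 * |U (i + k) ω| ^ 2 + 2 * |U i ω| ^ 2)) ℙ :=
    (integrable_finset_sum _ fun i _ =>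
      (((hU2 (i + k)).1.const_mul 2).add ((hU2 i).1.const_mul 2))).const_mul _
  have hfi : Integrable f ℙ := by
    refine hbint.mono' hfmeas.aestronglyMeasurable (Filter.Eventually.of_forall fun ω => ?_)
    rw [Real.norm_eq_abs, abs_of_nonneg (by rw [hfdef]; positivity)]
    exact hfb ω
  -- properties of g
  have hgmeas : Measurable[futureSigma U (κ + r)] g := by
    refine Measurable.pow_const ?_ 2
    refine Finset.measurable_sum _ fun i hi => Measurable.sub ?_ ?_
    · exact (clmp_meas M).comp (hUn (i + k) (by
        have := (Finset.mem_Ico.mp hi).1; omega))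
    · exact (clmp_meas M).comp (hUn i (by
        have := (Finset.mem_Ico.mp hi).1; omega))
  have hgsm : StronglyMeasurable[futureSigma U (κ + r)] g := hgmeas.stronglyMeasurable
  have hgB : ∀ ω, |g ω| ≤ 4 * (K : ℝ) ^ 2 * M ^ 2 := by
    intro ω
    have hT : |∑ i ∈ Finset.Ico s (s + K), (clmp M (U (i + k) ω) - clmp M (U i ω))|
        ≤ (K : ℝ) * (2 * M) := by
      calc |∑ i ∈ Finset.Ico s (s + K), (clmp M (U (i + k) ω) - clmp M (U i ω))|
          ≤ ∑ i ∈ Finset.Ico s (s + K), |clmp M (U (i + k) ω) - clmp M (U i ω)| :=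
            Finset.abs_sum_le_sum_abs _ _
        _ ≤ ∑ i ∈ Finset.Ico s (s + K), (2 * M) := by
            refine Finset.sum_le_sum fun i _ => ?_
            calc |clmp M (U (i + k) ω) - clmp M (U i ω)|
                ≤ |clmp M (U (i + k) ω)| + |clmp M (U i ω)| := abs_sub _ _
              _ ≤ M + M := add_le_add (clmp_abs_le hM0.le _) (clmp_abs_le hM0.le _)
              _ = 2 * M := by ring
        _ = (K : ℝ) * (2 * M) := by
            rw [Finset.sum_const, hcard, nsmul_eq_mul]
    rw [hgdef]
    have h1 : |(∑ i ∈ Finset.Ico s (s + K),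
        (clmp M (U (i + k) ω) - clmp M (U i ω))) ^ 2|
        = |∑ i ∈ Finset.Ico s (s + K), (clmp M (U (i + k) ω) - clmp M (U i ω))| ^ 2 := by
      rw [abs_of_nonneg (sq_nonneg _), sq_abs]
    rw [h1]
    calc |∑ i ∈ Finset.Ico s (s + K), (clmp M (U (i + k) ω) - clmp M (U i ω))| ^ 2
        ≤ ((K : ℝ) * (2 * M)) ^ 2 := pow_le_pow_left₀ (abs_nonneg _) hT 2
      _ = 4 * (K : ℝ) ^ 2 * M ^ 2 := by ring
  have hgi : Integrable g ℙ := by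
    refine Integrable.mono' (integrable_const (4 * (K : ℝ) ^ 2 * M ^ 2))
      ((hgsm.mono hn).aestronglyMeasurable) (Filter.Eventually.of_forall fun ω => ?_)
    rw [Real.norm_eq_abs]; exact hgB ω
  -- mixing estimate for g
  set al : ℝ := C * (r : ℝ) ^ (-v) with hal'
  have halpos : (0:ℝ) < al := mul_pos hC (Real.rpow_pos_of_pos hrpos _)
  have hmix' : ∀ A B : Set Ω, MeasurableSet[pastSigma U κ] A →
      MeasurableSet[futureSigma U (κ + r)] B →
      |(ℙ (A ∩ B)).toReal - (ℙ A).toReal * (ℙ B).toReal| ≤ al := fun A B hA hB =>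
    hMix κ r hr A B hA hB
  have hcd : ∫ ω, |(ℙ[g|pastSigma U κ]) ω - ∫ y, g y ∂ℙ| ∂ℙ
      ≤ 4 * (4 * (K : ℝ) ^ 2 * M ^ 2) * al :=
    condexp_dist_le hm hn hmix' hgsm (by positivity) hgB
  have hm2q : M ^ (2 * q) = (M ^ q) ^ 2 := by rw [mul_comm 2 q, pow_mul]
  -- pointwise truncation bound
  have hpoint : ∀ ω, |f ω - g ω| ≤ (K : ℝ) / M ^ q * ∑ i ∈ Finset.Ico s (s + K),
      (|U (i + k) ω| ^ (2 * q + 2) + |U i ω| ^ (2 * q + 2)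
        + 4 * |U (i + k) ω| ^ 2 + 4 * |U i ω| ^ 2) := by
    intro ω
    set Sv := ∑ i ∈ Finset.Ico s (s + K), (U (i + k) ω - U i ω) with hSv
    set Tv := ∑ i ∈ Finset.Ico s (s + K), (clmp M (U (i + k) ω) - clmp M (U i ω)) with hTv
    have h0 : f ω - g ω = (Sv - Tv) * (Sv + Tv) := by
      simp only [hfdef, hgdef, hSv, hTv]; ring
    have ha2 : (Sv - Tv) ^ 2 ≤ (K : ℝ) * (∑ i ∈ Finset.Ico s (s + K),
        (2 * |U (i + k) ω| ^ (2 * q + 2) + 2 * |U i ω| ^ (2 * q + 2))) / M ^ (2 * q) := by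
      have hSl : Sv - Tv = ∑ i ∈ Finset.Ico s (s + K),
          ((U (i + k) ω - clmp M (U (i + k) ω)) - (U i ω - clmp M (U i ω))) := by
        rw [hSv, hTv, ← Finset.sum_sub_distrib]
        exact Finset.sum_congr rfl fun i _ => by ring
      rw [hSl]
      have := sq_sum_le (Finset.Ico s (s + K))
        (fun i => (U (i + k) ω - clmp M (U (i + k) ω)) - (U i ω - clmp M (U i ω)))
        (fun i => (2 * |U (i + k) ω| ^ (2 * q + 2) + 2 * |U i ω| ^ (2 * q + 2)) / M ^ (2 * q))
        ?_
      · rw [hcard] at this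
        refine this.trans ?_
        rw [← Finset.sum_div, mul_div_assoc]
      · intro i _
        show ((U (i + k) ω - clmp M (U (i + k) ω)) - (U i ω - clmp M (U i ω))) ^ 2
          ≤ (2 * |U (i + k) ω| ^ (2 * q + 2) + 2 * |U i ω| ^ (2 * q + 2)) / M ^ (2 * q)
        have e1 := clmp_sq_diff_le hM0 q (U (i + k) ω)
        have e2 := clmp_sq_diff_le hM0 q (U i ω)
        have key : ((U (i + k) ω - clmp M (U (i + k) ω)) - (U i ω - clmp M (U i ω))) ^ 2
            ≤ 2 * (U (i + k) ω - clmp M (U (i + k) ω)) ^ 2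
              + 2 * (U i ω - clmp M (U i ω)) ^ 2 := by
          nlinarith [sq_nonneg ((U (i + k) ω - clmp M (U (i + k) ω))
            + (U i ω - clmp M (U i ω)))]
        have hsplit : (2 * |U (i + k) ω| ^ (2 * q + 2) + 2 * |U i ω| ^ (2 * q + 2))
              / M ^ (2 * q)
            = 2 * (|U (i + k) ω| ^ (2 * q + 2) / M ^ (2 * q))
              + 2 * (|U i ω| ^ (2 * q + 2) / M ^ (2 * q)) := by ring
        rw [hsplit]
        linarith
    have hb2 : (Sv + Tv) ^ 2 ≤ (K : ℝ) * ∑ i ∈ Finset.Ico s (s + K),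
        (8 * |U (i + k) ω| ^ 2 + 8 * |U i ω| ^ 2) := by
      have hSr : Sv + Tv = ∑ i ∈ Finset.Ico s (s + K),
          ((U (i + k) ω - U i ω) + (clmp M (U (i + k) ω) - clmp M (U i ω))) := by
        rw [hSv, hTv, ← Finset.sum_add_distrib]
      rw [hSr]
      have := sq_sum_le (Finset.Ico s (s + K))
        (fun i => (U (i + k) ω - U i ω) + (clmp M (U (i + k) ω) - clmp M (U i ω)))
        (fun i => 8 * |U (i + k) ω| ^ 2 + 8 * |U i ω| ^ 2) ?_
      · rwa [hcard] at this
      · intro i _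
        show ((U (i + k) ω - U i ω) + (clmp M (U (i + k) ω) - clmp M (U i ω))) ^ 2
          ≤ 8 * |U (i + k) ω| ^ 2 + 8 * |U i ω| ^ 2
        have hvb1 := clmp_abs_le_abs hM0.le (U (i + k) ω)
        have hvb2 := clmp_abs_le_abs hM0.le (U i ω)
        have habsb : |(U (i + k) ω - U i ω) + (clmp M (U (i + k) ω) - clmp M (U i ω))|
            ≤ 2 * |U (i + k) ω| + 2 * |U i ω| := by
          calc |(U (i + k) ω - U i ω) + (clmp M (U (i + k) ω) - clmp M (U i ω))|
              ≤ |U (i + k) ω - U i ω| + |clmp M (U (i + k) ω) - clmp M (U i ω)| :=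
                abs_add_le _ _
            _ ≤ (|U (i + k) ω| + |U i ω|) + (|clmp M (U (i + k) ω)| + |clmp M (U i ω)|) :=
                add_le_add (abs_sub _ _) (abs_sub _ _)
            _ ≤ 2 * |U (i + k) ω| + 2 * |U i ω| := by linarith
        have hsq : ((U (i + k) ω - U i ω) + (clmp M (U (i + k) ω) - clmp M (U i ω))) ^ 2
            ≤ (2 * |U (i + k) ω| + 2 * |U i ω|) ^ 2 := by
          rw [← sq_abs]
          exact pow_le_pow_left₀ (abs_nonneg _) habsb 2
        nlinarith [sq_nonneg (|U (i + k) ω| - |U i ω|)]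
    have hPQ : (∑ i ∈ Finset.Ico s (s + K),
          (2 * |U (i + k) ω| ^ (2 * q + 2) + 2 * |U i ω| ^ (2 * q + 2)))
        + (∑ i ∈ Finset.Ico s (s + K), (8 * |U (i + k) ω| ^ 2 + 8 * |U i ω| ^ 2))
        = 2 * ∑ i ∈ Finset.Ico s (s + K),
          (|U (i + k) ω| ^ (2 * q + 2) + |U i ω| ^ (2 * q + 2)
            + 4 * |U (i + k) ω| ^ 2 + 4 * |U i ω| ^ 2) := by
      rw [← Finset.sum_add_distrib, Finset.mul_sum]
      exact Finset.sum_congr rfl fun i _ => by ring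
    calc |f ω - g ω| = |(Sv - Tv) * (Sv + Tv)| := by rw [h0]
      _ ≤ (M ^ q * (Sv - Tv) ^ 2 + (Sv + Tv) ^ 2 / M ^ q) / 2 := abs_mul_le_lam hMq
      _ ≤ (M ^ q * ((K : ℝ) * (∑ i ∈ Finset.Ico s (s + K),
            (2 * |U (i + k) ω| ^ (2 * q + 2) + 2 * |U i ω| ^ (2 * q + 2))) / M ^ (2 * q))
          + ((K : ℝ) * ∑ i ∈ Finset.Ico s (s + K),
            (8 * |U (i + k) ω| ^ 2 + 8 * |U i ω| ^ 2)) / M ^ q) / 2 := by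
          gcongr
      _ = (K : ℝ) / M ^ q * ∑ i ∈ Finset.Ico s (s + K),
          (|U (i + k) ω| ^ (2 * q + 2) + |U i ω| ^ (2 * q + 2)
            + 4 * |U (i + k) ω| ^ 2 + 4 * |U i ω| ^ 2) := by
          rw [hm2q]
          have key : ∀ a b c : ℝ, a + b = 2 * c →
              (M ^ q * ((K : ℝ) * a / (M ^ q) ^ 2) + (K : ℝ) * b / M ^ q) / 2
                = (K : ℝ) / M ^ q * c := by
            intro a b c h
            have hb : b = 2 * c - a := by linarith
            subst hb
            have hMqne : (M ^ q) ≠ 0 := ne_of_gt hMq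
            field_simp
            ring
          exact key _ _ _ hPQ
  -- integral of the truncation bound
  have hsummand_int : ∀ i, Integrable (fun ω => |U (i + k) ω| ^ (2 * q + 2)
      + |U i ω| ^ (2 * q + 2) + 4 * |U (i + k) ω| ^ 2 + 4 * |U i ω| ^ 2) ℙ := by
    intro i
    exact (((hUq (i + k)).1.add (hUq i).1).add ((hU2 (i + k)).1.const_mul 4)).add
      ((hU2 i).1.const_mul 4)
  have hsummand_val : ∀ i, ∫ ω, (|U (i + k) ω| ^ (2 * q + 2)
      + |U i ω| ^ (2 * q + 2) + 4 * |U (i + k) ω| ^ 2 + 4 * |U i ω| ^ 2) ∂ℙ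
      = 2 * Cq + 8 * E2 := by
    intro i
    have iA : Integrable (fun ω => |U (i + k) ω| ^ (2 * q + 2)) ℙ := (hUq (i + k)).1
    have iB : Integrable (fun ω => |U i ω| ^ (2 * q + 2)) ℙ := (hUq i).1
    have iC : Integrable (fun ω => 4 * |U (i + k) ω| ^ 2) ℙ := (hU2 (i + k)).1.const_mul 4
    have iD : Integrable (fun ω => 4 * |U i ω| ^ 2) ℙ := (hU2 i).1.const_mul 4
    have iAB : Integrable (fun ω => |U (i + k) ω| ^ (2 * q + 2)
        + |U i ω| ^ (2 * q + 2)) ℙ := iA.add iB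
    have iABC : Integrable (fun ω => |U (i + k) ω| ^ (2 * q + 2)
        + |U i ω| ^ (2 * q + 2) + 4 * |U (i + k) ω| ^ 2) ℙ := iAB.add iC
    rw [integral_add iABC iD, integral_add iAB iC, integral_add iA iB,
      integral_const_mul, integral_const_mul, (hUq (i + k)).2, (hUq i).2,
      (hU2 (i + k)).2, (hU2 i).2, ← hCq', ← hE2']
    ring
  have hbnd2int : Integrable (fun ω => (K : ℝ) / M ^ q * ∑ i ∈ Finset.Ico s (s + K),
      (|U (i + k) ω| ^ (2 * q + 2) + |U i ω| ^ (2 * q + 2)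
        + 4 * |U (i + k) ω| ^ 2 + 4 * |U i ω| ^ 2)) ℙ :=
    (integrable_finset_sum _ fun i _ => hsummand_int i).const_mul _
  have hIfg : ∫ ω, |f ω - g ω| ∂ℙ
      ≤ (K : ℝ) / M ^ q * ((K : ℝ) * (2 * Cq + 8 * E2)) := by
    have h1 : ∫ ω, |f ω - g ω| ∂ℙ ≤ ∫ ω, ((K : ℝ) / M ^ q * ∑ i ∈ Finset.Ico s (s + K),
        (|U (i + k) ω| ^ (2 * q + 2) + |U i ω| ^ (2 * q + 2)
          + 4 * |U (i + k) ω| ^ 2 + 4 * |U i ω| ^ 2)) ∂ℙ :=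
      integral_mono ((hfi.sub hgi).abs) hbnd2int hpoint
    refine h1.trans_eq ?_
    rw [integral_const_mul, integral_finset_sum _ fun i _ => hsummand_int i]
    congr 1
    rw [Finset.sum_congr rfl fun i _ => hsummand_val i, Finset.sum_const, hcard,
      nsmul_eq_mul]
  -- rpow arithmetic
  have hM2v : M ^ 2 * (r : ℝ) ^ (-v) = (r : ℝ) ^ (-w) := by
    rw [hM', ← Real.rpow_natCast ((r : ℝ) ^ t) 2, ← Real.rpow_mul hrpos.le,
      ← Real.rpow_add hrpos]
    congr 1
    push_cast
    rw [ht']; ring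
  have hMqle : 1 / M ^ q ≤ (r : ℝ) ^ (-w) := by
    rw [hM', ← Real.rpow_natCast ((r : ℝ) ^ t) q, ← Real.rpow_mul hrpos.le, one_div,
      ← Real.rpow_neg hrpos.le]
    exact Real.rpow_le_rpow_of_exponent_le hr1 (by nlinarith [hqt])
  -- final assembly
  have hdd := dist_decomp hm hfi hgi
  have hIg : ∫ ω, |(ℙ[g|pastSigma U κ]) ω - ∫ y, g y ∂ℙ| ∂ℙ
      ≤ 16 * C * (K : ℝ) ^ 2 * (r : ℝ) ^ (-w) := by
    refine hcd.trans_eq ?_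
    rw [hal', ← hM2v]; ring
  have hItr : 2 * ∫ ω, |f ω - g ω| ∂ℙ
      ≤ (4 * Cq + 16 * E2) * (K : ℝ) ^ 2 * (r : ℝ) ^ (-w) := by
    have h2 : 2 * ((K : ℝ) / M ^ q * ((K : ℝ) * (2 * Cq + 8 * E2)))
        = (4 * Cq + 16 * E2) * (K : ℝ) ^ 2 * (1 / M ^ q) := by ring
    have h3 : (4 * Cq + 16 * E2) * (K : ℝ) ^ 2 * (1 / M ^ q)
        ≤ (4 * Cq + 16 * E2) * (K : ℝ) ^ 2 * (r : ℝ) ^ (-w) := by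
      refine mul_le_mul_of_nonneg_left hMqle ?_
      positivity
    linarith [hIfg]
  calc ∫ ω, |(ℙ[f|pastSigma U κ]) ω - ∫ ω', f ω' ∂ℙ| ∂ℙ
      ≤ (∫ ω, |(ℙ[g|pastSigma U κ]) ω - ∫ y, g y ∂ℙ| ∂ℙ) + 2 * ∫ ω, |f ω - g ω| ∂ℙ := hdd
    _ ≤ 16 * C * (K : ℝ) ^ 2 * (r : ℝ) ^ (-w)
        + (4 * Cq + 16 * E2) * (K : ℝ) ^ 2 * (r : ℝ) ^ (-w) := by linarith
    _ = (16 * C + 4 * Cq + 16 * E2) * (K : ℝ) ^ 2 * (r : ℝ) ^ (-w) := by ring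


end DepNoise
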